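/- For every closed expression e, the CEK machine and the CESK machine operate in lock-step: for any number of steps n, the CEK machine reaches a state after n transitions from its initial configuration if and only if the CESK machine reaches the corresponding state after n transitions, where correspondence is given by the substitution function that replaces each address in an environment by the store contents at that address. -/

import Mathlib

/- Statement 0: for every closed expression, the CEK machine and the CESK
   machine operate in lock-step, where a CESK state corresponds to the CEK
   state obtained by recursively substituting store contents for addresses
   in environments. -/

inductive Exp : Type
  | ref : String → Exp
  | lam : String → Exp → Exp
  | app : Exp → Exp → Exp
deriving DecidableEq

def Exp.fv : Exp → List String
  | .ref x => [x]
  | .lam x e => e.fv.filter (· ≠ x)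
  | .app e₀ e₁ => e₀.fv ++ e₁.fv

def Exp.Closed (e : Exp) : Prop := e.fv = []

/- CEK machine -/

mutual
  inductive CEnv : Type
    | mk : List (String × CClo) → CEnv
  inductive CClo : Type
    | mk : Exp → CEnv → CClo
end

def CEnv.lookup : CEnv → String → Option CClo
  | .mk l, x => l.lookup x

def CEnv.ext : CEnv → String → CClo → CEnv
  | .mk l, x, c => .mk ((x, c) :: l)

inductive CKont : Type
  | mt
  | ar (e : Exp) (ρ : CEnv) (κ : CKont)
  | fn (v : Exp) (ρ : CEnv) (κ : CKont)

abbrev CEKState := Exp × CEnv × CKont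

inductive CEKStep : CEKState → CEKState → Prop
  | var {x ρ κ v ρ'} :
      CEnv.lookup ρ x = some (CClo.mk v ρ') →
      CEKStep (.ref x, ρ, κ) (v, ρ', κ)
  | app {e₀ e₁ ρ κ} :
      CEKStep (.app e₀ e₁, ρ, κ) (e₀, ρ, .ar e₁ ρ κ)
  | arg {x e ρ e' ρ' κ} :
      CEKStep (.lam x e, ρ, .ar e' ρ' κ) (e', ρ', .fn (.lam x e) ρ κ)
  | beta {x e ρ y e' ρ' κ} :
      CEKStep (.lam x e, ρ, .fn (.lam y e') ρ' κ)
        (e', CEnv.ext ρ' y (CClo.mk (.lam x e) ρ), κ)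

def injCEK (e : Exp) : CEKState := (e, .mk [], .mt)

/- CESK machine: environments map variables to addresses, the store maps
   addresses (an infinite set, here ℕ) to closures. -/

abbrev Addr := ℕ
abbrev SEnv := List (String × Addr)
abbrev SClo := Exp × SEnv
abbrev SStore := List (Addr × SClo)

inductive SKont : Type
  | mt
  | ar (e : Exp) (ρ : SEnv) (κ : SKont)
  | fn (v : Exp) (ρ : SEnv) (κ : SKont)

abbrev CESKState := Exp × SEnv × SStore × SKont

inductive CESKStep : CESKState → CESKState → Prop
  | var {x ρ σ κ a v ρ'} :
      ρ.lookup x = some a → σ.lookup a = some (v, ρ') →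
      CESKStep (.ref x, ρ, σ, κ) (v, ρ', σ, κ)
  | app {e₀ e₁ ρ σ κ} :
      CESKStep (.app e₀ e₁, ρ, σ, κ) (e₀, ρ, σ, .ar e₁ ρ κ)
  | arg {x e ρ σ e' ρ' κ} :
      CESKStep (.lam x e, ρ, σ, .ar e' ρ' κ) (e', ρ', σ, .fn (.lam x e) ρ κ)
  | beta {x e ρ σ y e' ρ' κ} {a : Addr} :
      σ.lookup a = none →
      CESKStep (.lam x e, ρ, σ, .fn (.lam y e') ρ' κ)
        (e', (y, a) :: ρ', (a, (.lam x e, ρ)) :: σ, κ)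

def injCESK (e : Exp) : CESKState := (e, [], [], .mt)

/- The flattening (substitution) function, as an inductive relation:
   replace each address in an environment by the store contents there. -/

inductive FlattenEnv (σ : SStore) : SEnv → CEnv → Prop
  | nil : FlattenEnv σ [] (.mk [])
  | cons {x a ρ l v ρ' ρc'} :
      σ.lookup a = some (v, ρ') →
      FlattenEnv σ ρ' ρc' →
      FlattenEnv σ ρ (.mk l) →
      FlattenEnv σ ((x, a) :: ρ) (.mk ((x, CClo.mk v ρc') :: l))

inductive FlattenKont (σ : SStore) : SKont → CKont → Prop
  | mt : FlattenKont σ .mt .mt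
  | ar {e ρ ρc κ κc} :
      FlattenEnv σ ρ ρc → FlattenKont σ κ κc →
      FlattenKont σ (.ar e ρ κ) (.ar e ρc κc)
  | fn {v ρ ρc κ κc} :
      FlattenEnv σ ρ ρc → FlattenKont σ κ κc →
      FlattenKont σ (.fn v ρ κ) (.fn v ρc κc)

/-- A CESK state corresponds to a CEK state when flattening the store through
    the environment and continuation components yields that CEK state. -/
def Corresponds : CESKState → CEKState → Prop
  | (e, ρ, σ, κ), (e', ρc, κc) =>
      e = e' ∧ FlattenEnv σ ρ ρc ∧ FlattenKont σ κ κc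

/-- Exactly-n-step iteration of a relation. -/
def StepN {α : Type _} (r : α → α → Prop) : ℕ → α → α → Prop
  | 0, a, b => a = b
  | n + 1, a, b => ∃ c, r a c ∧ StepN r n c b


/-! Auxiliary lemmas -/

lemma lookup_cons_eq' {α β} [BEq α] [LawfulBEq α] (k : α) (b : β) (l : List (α × β)) :
    List.lookup k ((k, b) :: l) = some b := by simp [List.lookup]

lemma lookup_cons_ne' {α β} [BEq α] [LawfulBEq α] {k k' : α} (h : k ≠ k') (b : β)
    (l : List (α × β)) : List.lookup k ((k', b) :: l) = List.lookup k l := by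
  have : (k == k') = false := beq_eq_false_iff_ne.mpr h
  simp [List.lookup, this]

lemma lookup_none_of_forall_ne (σ : SStore) (a : Addr)
    (h : ∀ p ∈ σ, p.1 ≠ a) : σ.lookup a = none := by
  induction σ with
  | nil => rfl
  | cons p σ ih =>
    have h1 : a ≠ p.1 := Ne.symm (h p (by simp))
    rw [show (p : Addr × SClo) = (p.1, p.2) from rfl, lookup_cons_ne' h1]
    exact ih (fun q hq => h q (by simp [hq]))

lemma le_foldr_max (l : List ℕ) : ∀ x ∈ l, x ≤ l.foldr max 0 := by
  induction l with
  | nil => simp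
  | cons y l ih =>
    intro x hx
    rcases List.mem_cons.mp hx with h | h
    · simp [h, le_max_iff]
    · simp only [List.foldr_cons, le_max_iff]
      exact Or.inr (ih x h)

lemma fresh_exists (σ : SStore) : ∃ a : Addr, σ.lookup a = none := by
  refine ⟨(σ.map Prod.fst).foldr max 0 + 1, lookup_none_of_forall_ne _ _ ?_⟩
  intro p hp
  have := le_foldr_max (σ.map Prod.fst) p.1 (List.mem_map_of_mem hp)
  intro hcon
  rw [hcon] at this
  omega

lemma flattenEnv_ext {σ : SStore} {ρ ρc} (h : FlattenEnv σ ρ ρc)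
    {a c} (ha : σ.lookup a = none) : FlattenEnv ((a, c) :: σ) ρ ρc := by
  induction h with
  | nil => exact .nil
  | @cons x a' ρ₀ l v ρ' ρc' hl _ _ ih1 ih2 =>
    refine .cons ?_ ih1 ih2
    have hne : a' ≠ a := by rintro rfl; rw [hl] at ha; cases ha
    rw [lookup_cons_ne' hne]; exact hl

lemma flattenKont_ext {σ : SStore} {κ κc} (h : FlattenKont σ κ κc)
    {a c} (ha : σ.lookup a = none) : FlattenKont ((a, c) :: σ) κ κc := by
  induction h with
  | mt => exact .mt
  | ar he _ ih => exact .ar (flattenEnv_ext he ha) ih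
  | fn he _ ih => exact .fn (flattenEnv_ext he ha) ih

lemma flatten_lookup {σ : SStore} {ρ ρc} (h : FlattenEnv σ ρ ρc) :
    ∀ x v ρc', CEnv.lookup ρc x = some (CClo.mk v ρc') →
    ∃ a ρ', ρ.lookup x = some a ∧ σ.lookup a = some (v, ρ') ∧
      FlattenEnv σ ρ' ρc' := by
  induction h with
  | nil => intro x v ρc' h; simp [CEnv.lookup, List.lookup] at h
  | @cons x a ρ l v ρ' ρc' hl hf _ _ ih =>
    intro x' v' ρcq hq
    by_cases hx : x' = x
    · subst hx
      rw [show CEnv.lookup (.mk ((x', CClo.mk v ρc') :: l)) x' =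
            List.lookup x' ((x', CClo.mk v ρc') :: l) from rfl,
          lookup_cons_eq'] at hq
      obtain ⟨rfl, rfl⟩ : v' = v ∧ ρcq = ρc' := by
        have h2 := Option.some.inj hq
        injection h2 with h3 h4
        exact ⟨h3.symm, h4.symm⟩
      exact ⟨a, ρ', lookup_cons_eq' x' a ρ, hl, hf⟩
    · rw [show CEnv.lookup (.mk ((x, CClo.mk v ρc') :: l)) x' =
            List.lookup x' ((x, CClo.mk v ρc') :: l) from rfl,
          lookup_cons_ne' hx] at hq
      obtain ⟨b, ρ'', hb1, hb2, hb3⟩ := ih x' v' ρcq hq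
      exact ⟨b, ρ'', by rw [lookup_cons_ne' hx]; exact hb1, hb2, hb3⟩

lemma flatten_lookup' {σ : SStore} {ρ ρc} (h : FlattenEnv σ ρ ρc) :
    ∀ x a v ρ', ρ.lookup x = some a → σ.lookup a = some (v, ρ') →
    ∃ ρc', CEnv.lookup ρc x = some (CClo.mk v ρc') ∧ FlattenEnv σ ρ' ρc' := by
  induction h with
  | nil => intro x a v ρ' h; simp [List.lookup] at h
  | @cons x a ρ l v ρ' ρc' hl hf _ _ ih =>
    intro x' a' v' ρ'' ha hσ
    by_cases hx : x' = x
    · subst hx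
      rw [lookup_cons_eq'] at ha
      obtain rfl : a = a' := Option.some.inj ha
      rw [hl] at hσ
      obtain ⟨rfl, rfl⟩ : v' = v ∧ ρ'' = ρ' := by
        have := Option.some.inj hσ
        exact ⟨congrArg Prod.fst this |>.symm, congrArg Prod.snd this |>.symm⟩
      exact ⟨ρc', lookup_cons_eq' x' _ l, hf⟩
    · rw [lookup_cons_ne' hx] at ha
      obtain ⟨ρcq, h1, h2⟩ := ih x' a' v' ρ'' ha hσ
      refine ⟨ρcq, ?_, h2⟩
      show List.lookup x' ((x, CClo.mk v ρc') :: l) = _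
      rw [lookup_cons_ne' hx]; exact h1

lemma forward_step {ςs : CESKState} {ς ς' : CEKState}
    (hc : Corresponds ςs ς) (hs : CEKStep ς ς') :
    ∃ ςs', CESKStep ςs ςs' ∧ Corresponds ςs' ς' := by
  obtain ⟨e, ρ, σ, κ⟩ := ςs
  obtain ⟨e', ρc, κc⟩ := ς
  obtain ⟨rfl, henv, hkont⟩ := hc
  cases hs with
  | @var x _ _ v ρc' hl =>
    obtain ⟨a, ρ', h1, h2, h3⟩ := flatten_lookup henv x v ρc' hl
    exact ⟨(v, ρ', σ, κ), .var h1 h2, rfl, h3, hkont⟩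
  | app => exact ⟨_, .app, rfl, henv, .ar henv hkont⟩
  | arg =>
    cases hkont with
    | ar he hk => exact ⟨_, .arg, rfl, he, .fn henv hk⟩
  | @beta x1 e1 _ y1 e1' ρc' κc' =>
    cases hkont with
    | fn he hk =>
      rename_i ρ' κ'
      obtain ⟨a, ha⟩ := fresh_exists σ
      refine ⟨_, .beta ha, rfl, ?_, flattenKont_ext hk ha⟩
      cases ρc' with
      | mk l =>
        exact .cons (lookup_cons_eq' a _ σ) (flattenEnv_ext henv ha)
          (flattenEnv_ext he ha)

lemma backward_step {ςs ςs' : CESKState} {ς : CEKState}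
    (hc : Corresponds ςs ς) (hs : CESKStep ςs ςs') :
    ∃ ς', CEKStep ς ς' ∧ Corresponds ςs' ς' := by
  obtain ⟨e, ρ, σ, κ⟩ := ςs
  obtain ⟨e', ρc, κc⟩ := ς
  obtain ⟨rfl, henv, hkont⟩ := hc
  cases hs with
  | @var x _ _ _ a v ρ' h1 h2 =>
    obtain ⟨ρc', hl, hf⟩ := flatten_lookup' henv x a v ρ' h1 h2
    exact ⟨(v, ρc', κc), .var hl, rfl, hf, hkont⟩
  | app => exact ⟨_, .app, rfl, henv, .ar henv hkont⟩
  | arg =>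
    cases hkont with
    | ar he hk => exact ⟨_, .arg, rfl, he, .fn henv hk⟩
  | @beta x1 e1 _ _ y1 e1' ρ' κ' a ha =>
    cases hkont with
    | fn he hk =>
      rename_i ρc' κc'
      refine ⟨_, .beta, rfl, ?_, flattenKont_ext hk ha⟩
      cases ρc' with
      | mk l =>
        exact .cons (lookup_cons_eq' a _ σ) (flattenEnv_ext henv ha)
          (flattenEnv_ext he ha)

lemma lockstep_n (n : ℕ) : ∀ {ςs : CESKState} {ς : CEKState},
    Corresponds ςs ς →
    (∀ ς' : CEKState, StepN CEKStep n ς ς' →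
      ∃ ςs', StepN CESKStep n ςs ςs' ∧ Corresponds ςs' ς') ∧
    (∀ ςs' : CESKState, StepN CESKStep n ςs ςs' →
      ∃ ς', StepN CEKStep n ς ς' ∧ Corresponds ςs' ς') := by
  induction n with
  | zero =>
    intro ςs ς hc
    exact ⟨fun ς' h => ⟨ςs, rfl, h ▸ hc⟩, fun ςs' h => ⟨ς, rfl, h ▸ hc⟩⟩
  | succ n ih =>
    intro ςs ς hc
    constructor
    · rintro ς' ⟨c, hstep, hrest⟩
      obtain ⟨ςs₁, hs1, hc1⟩ := forward_step hc hstep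
      obtain ⟨ςs'', h1, h2⟩ := (ih hc1).1 ς' hrest
      exact ⟨ςs'', ⟨ςs₁, hs1, h1⟩, h2⟩
    · rintro ςs' ⟨c, hstep, hrest⟩
      obtain ⟨ς₁, hs1, hc1⟩ := backward_step hc hstep
      obtain ⟨ς'', h1, h2⟩ := (ih hc1).2 ςs' hrest
      exact ⟨ς'', ⟨ς₁, hs1, h1⟩, h2⟩

theorem cek_cesk_lockstep (e : Exp) (he : e.Closed) (n : ℕ) :
    (∀ ς : CEKState, StepN CEKStep n (injCEK e) ς →
      ∃ ςs : CESKState, StepN CESKStep n (injCESK e) ςs ∧ Corresponds ςs ς) ∧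
    (∀ ςs : CESKState, StepN CESKStep n (injCESK e) ςs →
      ∃ ς : CEKState, StepN CEKStep n (injCEK e) ς ∧ Corresponds ςs ς) := by
  exact lockstep_n n ⟨rfl, .nil, .mt⟩
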